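/- Let H : 𝒬_o(Ω) → [0,∞] be a nonnegative set function with D̲_λ H ∈ L^1(O) for an open set O ⊂ Ω. Define G(Q) := H(Q) − ∫_Q D̲_λ H(y) dy for open cubes Q ⊂ O. Then D̲_λ G(x) = 0 for λ-almost every x ∈ O, namely at every x which is simultaneously a Lebesgue point of D̲_λ H and a point where the derivative of the measure D̲_λ H · λ equals D̲_λ H(x). -/

import Mathlib

open MeasureTheory Filter Set
open scoped ENNReal NNReal

noncomputable section

/-- `ℝ^d` as Euclidean space. -/
abbrev Euc (d : ℕ) := EuclideanSpace ℝ (Fin d)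

/-- `Q` is an (axis-parallel, nondegenerate) open cube in `ℝ^d`. -/
def IsOpenCube {d : ℕ} (Q : Set (Euc d)) : Prop :=
  ∃ (a : Euc d) (ρ : ℝ), 0 < ρ ∧ Q = {y | ∀ i, a i < y i ∧ y i < a i + ρ}

/-- Lower derivative of a set function `G` with respect to Lebesgue measure. -/
def lowerDeriv {d : ℕ} (Ω : Set (Euc d)) (G : Set (Euc d) → EReal) (x : Euc d) : EReal :=
  ⨆ (ρ : ℝ) (_ : 0 < ρ),
    ⨅ (Q : Set (Euc d)) (_ : IsOpenCube Q ∧ Q ⊆ Ω ∧ x ∈ Q ∧ Metric.diam Q ≤ ρ),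
      G Q * (((volume Q).toReal⁻¹ : ℝ) : EReal)

/-- Lower derivative of a nonnegative set function `H` with respect to Lebesgue measure. -/
def lowerDerivE {d : ℕ} (Ω : Set (Euc d)) (H : Set (Euc d) → ℝ≥0∞) (x : Euc d) : ℝ≥0∞ :=
  ⨆ (ρ : ℝ) (_ : 0 < ρ),
    ⨅ (Q : Set (Euc d)) (_ : IsOpenCube Q ∧ Q ⊆ Ω ∧ x ∈ Q ∧ Metric.diam Q ≤ ρ),
      H Q / volume Q

namespace CubeAux

variable {d : ℕ}

def cube (a : Euc d) (ρ : ℝ) : Set (Euc d) := {y | ∀ i, a i < y i ∧ y i < a i + ρ}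

def ccube (a : Euc d) (ρ : ℝ) : Set (Euc d) := {y | ∀ i, a i ≤ y i ∧ y i ≤ a i + ρ}

lemma cube_eq_preimage (a : Euc d) (ρ : ℝ) :
    cube a ρ = (MeasurableEquiv.toLp 2 (Fin d → ℝ)).symm ⁻¹' (univ.pi fun i => Ioo (a i) (a i + ρ)) := by
  ext y
  simp [cube, Set.mem_pi, and_assoc]

lemma ccube_eq_preimage (a : Euc d) (ρ : ℝ) :
    ccube a ρ = (MeasurableEquiv.toLp 2 (Fin d → ℝ)).symm ⁻¹' (univ.pi fun i => Icc (a i) (a i + ρ)) := by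
  ext y
  simp only [ccube, mem_preimage, MeasurableEquiv.coe_mk,
    Set.mem_pi, Set.mem_univ, mem_Icc, forall_true_left, mem_setOf_eq, true_implies]
  rfl

lemma volume_cube (a : Euc d) {ρ : ℝ} (hρ : 0 ≤ ρ) :
    volume (cube a ρ) = ENNReal.ofReal ρ ^ d := by
  rw [cube_eq_preimage,
    (EuclideanSpace.volume_preserving_symm_measurableEquiv_toLp (Fin d)).measure_preimage
      (MeasurableSet.univ_pi fun i => measurableSet_Ioo).nullMeasurableSet,
    Real.volume_pi_Ioo]
  simp

lemma volume_ccube (a : Euc d) {ρ : ℝ} (hρ : 0 ≤ ρ) :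
    volume (ccube a ρ) = ENNReal.ofReal ρ ^ d := by
  rw [ccube_eq_preimage,
    (EuclideanSpace.volume_preserving_symm_measurableEquiv_toLp (Fin d)).measure_preimage
      (MeasurableSet.univ_pi fun i => measurableSet_Icc).nullMeasurableSet,
    Set.pi_univ_Icc, Real.volume_Icc_pi]
  simp

lemma isOpen_cube (a : Euc d) (ρ : ℝ) : IsOpen (cube a ρ) := by
  have : cube a ρ = ⋂ i, (EuclideanSpace.proj (𝕜 := ℝ) i) ⁻¹' (Ioo (a i) (a i + ρ)) := by
    ext y; simp [cube]
  rw [this]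
  exact isOpen_iInter_of_finite fun i =>
    isOpen_Ioo.preimage (EuclideanSpace.proj i).continuous

lemma cube_subset_ccube (a : Euc d) (ρ : ℝ) : cube a ρ ⊆ ccube a ρ :=
  fun y hy i => ⟨(hy i).1.le, (hy i).2.le⟩

lemma isClosed_ccube (a : Euc d) (ρ : ℝ) : IsClosed (ccube a ρ) := by
  have : ccube a ρ = ⋂ i, (EuclideanSpace.proj (𝕜 := ℝ) i) ⁻¹' (Icc (a i) (a i + ρ)) := by
    ext y; simp [ccube]
  rw [this]
  exact isClosed_iInter fun i => isClosed_Icc.preimage (EuclideanSpace.proj i).continuous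

lemma closure_cube_subset (a : Euc d) (ρ : ℝ) : closure (cube a ρ) ⊆ ccube a ρ :=
  closure_minimal (cube_subset_ccube a ρ) (isClosed_ccube a ρ)

lemma dist_le_of_mem_ccube {a : Euc d} {ρ : ℝ} (hρ : 0 ≤ ρ) {y z : Euc d}
    (hy : y ∈ ccube a ρ) (hz : z ∈ ccube a ρ) : dist y z ≤ ρ * Real.sqrt d := by
  rw [EuclideanSpace.dist_eq]
  have h1 : ∑ i : Fin d, dist (y i) (z i) ^ 2 ≤ (d : ℝ) * ρ ^ 2 := by
    calc ∑ i : Fin d, dist (y i) (z i) ^ 2 ≤ ∑ _i : Fin d, ρ ^ 2 := by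
          refine Finset.sum_le_sum fun i _ => ?_
          have : |y i - z i| ≤ ρ := by
            rw [abs_le]
            constructor <;> nlinarith [(hy i).1, (hy i).2, (hz i).1, (hz i).2]
          have hd : dist (y i) (z i) ≤ ρ := by rw [Real.dist_eq]; exact this
          exact pow_le_pow_left₀ dist_nonneg hd 2
      _ = (d : ℝ) * ρ ^ 2 := by simp [Finset.sum_const, mul_comm]
  calc Real.sqrt (∑ i : Fin d, dist (y i) (z i) ^ 2) ≤ Real.sqrt ((d : ℝ) * ρ ^ 2) :=
        Real.sqrt_le_sqrt h1
    _ = ρ * Real.sqrt d := by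
        rw [Real.sqrt_mul (Nat.cast_nonneg d), Real.sqrt_sq hρ]; ring

lemma isBounded_ccube (a : Euc d) {ρ : ℝ} (hρ : 0 ≤ ρ) :
    Bornology.IsBounded (ccube a ρ) := by
  have ha : a ∈ ccube a ρ := fun i => ⟨le_rfl, by linarith⟩
  refine (Metric.isBounded_closedBall (x := a) (r := ρ * Real.sqrt d)).subset fun y hy => ?_
  exact Metric.mem_closedBall.2 (dist_le_of_mem_ccube hρ hy ha)

lemma diam_cube_le (a : Euc d) {ρ : ℝ} (hρ : 0 ≤ ρ) :
    Metric.diam (cube a ρ) ≤ ρ * Real.sqrt d :=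
  Metric.diam_le_of_forall_dist_le (by positivity) fun y hy z hz =>
    dist_le_of_mem_ccube hρ (cube_subset_ccube a ρ hy) (cube_subset_ccube a ρ hz)

lemma mem_cube_self (a : Euc d) {ρ : ℝ} (hρ : 0 < ρ) :
    (WithLp.toLp 2 (fun i => a i + ρ / 2) : Euc d) ∈ cube a ρ := fun i => by constructor <;> simp <;> linarith

/-- existence of small cubes inside an open set around a point -/
lemma exists_cube_subset {O : Set (Euc d)} (hO : IsOpen O) {x : Euc d} (hx : x ∈ O)
    {δ : ℝ} (hδ : 0 < δ) :
    ∃ Q, IsOpenCube Q ∧ Q ⊆ O ∧ x ∈ Q ∧ Metric.diam Q ≤ δ := by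
  obtain ⟨ε, hε, hball⟩ := Metric.isOpen_iff.1 hO x hx
  set ρ : ℝ := min δ ε / (Real.sqrt d + 1) with hρdef
  have hsd : (0:ℝ) ≤ Real.sqrt d := Real.sqrt_nonneg d
  have hρ : 0 < ρ := by positivity
  have hlt : ρ * Real.sqrt d < min δ ε := by
    rw [hρdef, div_mul_eq_mul_div, div_lt_iff₀ (by positivity)]
    have : 0 < min δ ε := lt_min hδ hε
    nlinarith
  set a : Euc d := WithLp.toLp 2 (fun i => x i - ρ / 2) with ha
  refine ⟨cube a ρ, ⟨a, ρ, hρ, rfl⟩, ?_, ?_, ?_⟩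
  · intro y hy
    apply hball
    have hxc : x ∈ ccube a ρ := fun i => by constructor <;> simp [ha] <;> linarith
    have : dist y x ≤ ρ * Real.sqrt d :=
      dist_le_of_mem_ccube hρ.le (cube_subset_ccube a ρ hy) hxc
    exact Metric.mem_ball.2 (lt_of_le_of_lt this (hlt.trans_le (min_le_right _ _)))
  · intro i; constructor <;> simp [ha] <;> linarith
  · exact (diam_cube_le a hρ.le).trans (le_of_lt (hlt.trans_le (min_le_left _ _)))

end CubeAux

section Ainf

variable {d : ℕ}

open CubeAux

/-- the inner infimum at scale ρ -/
def Ainf (O : Set (Euc d)) (H : Set (Euc d) → ℝ≥0∞) (ρ : ℝ) (x : Euc d) : ℝ≥0∞ :=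
  ⨅ (Q : Set (Euc d)) (_ : IsOpenCube Q ∧ Q ⊆ O ∧ x ∈ Q ∧ Metric.diam Q ≤ ρ), H Q / volume Q

lemma lowerDerivE_eq (O : Set (Euc d)) (H : Set (Euc d) → ℝ≥0∞) (x : Euc d) :
    lowerDerivE O H x = ⨆ (ρ : ℝ) (_ : 0 < ρ), Ainf O H ρ x := rfl

lemma Ainf_antitone (O : Set (Euc d)) (H : Set (Euc d) → ℝ≥0∞) {ρ₁ ρ₂ : ℝ} (h : ρ₁ ≤ ρ₂)
    (x : Euc d) : Ainf O H ρ₂ x ≤ Ainf O H ρ₁ x := by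
  refine le_iInf₂ fun Q hQ => iInf₂_le Q ⟨hQ.1, hQ.2.1, hQ.2.2.1, hQ.2.2.2.trans h⟩

lemma Ainf_le_lowerDerivE (O : Set (Euc d)) (H : Set (Euc d) → ℝ≥0∞) {ρ : ℝ} (hρ : 0 < ρ)
    (x : Euc d) : Ainf O H ρ x ≤ lowerDerivE O H x :=
  le_iSup₂ (f := fun ρ (_ : 0 < ρ) => Ainf O H ρ x) ρ hρ

lemma measurable_Ainf (O : Set (Euc d)) (H : Set (Euc d) → ℝ≥0∞) (ρ : ℝ) :
    Measurable (Ainf O H ρ) := by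
  apply measurable_of_Iio
  intro t
  have : Ainf O H ρ ⁻¹' (Iio t) =
      ⋃₀ {Q | (IsOpenCube Q ∧ Q ⊆ O ∧ Metric.diam Q ≤ ρ) ∧ H Q / volume Q < t} := by
    ext x
    simp only [mem_preimage, mem_Iio, Ainf, iInf_lt_iff, mem_sUnion, mem_setOf_eq]
    constructor
    · rintro ⟨Q, ⟨h1, h2, h3, h4⟩, h5⟩
      exact ⟨Q, ⟨⟨h1, h2, h4⟩, h5⟩, h3⟩
    · rintro ⟨Q, ⟨⟨h1, h2, h4⟩, h5⟩, h3⟩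
      exact ⟨Q, ⟨h1, h2, h3, h4⟩, h5⟩
  rw [this]
  refine (isOpen_sUnion fun Q hQ => ?_).measurableSet
  obtain ⟨a, ρ', _, rfl⟩ := hQ.1.1
  exact isOpen_cube a ρ'

lemma measurable_lowerDerivE (O : Set (Euc d)) (H : Set (Euc d) → ℝ≥0∞) :
    Measurable (lowerDerivE O H) := by
  have heq : lowerDerivE O H = fun x => ⨆ n : ℕ, Ainf O H (1 / (n + 1)) x := by
    funext x
    apply le_antisymm
    · refine iSup₂_le fun ρ hρ => ?_
      obtain ⟨n, hn⟩ := exists_nat_one_div_lt hρ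
      exact le_trans (Ainf_antitone O H hn.le x) (le_iSup (fun n : ℕ => Ainf O H (1 / (n + 1)) x) n)
    · refine iSup_le fun n => Ainf_le_lowerDerivE O H (by positivity) x
  rw [heq]
  exact Measurable.iSup fun n => measurable_Ainf O H _

end Ainf

section VitaliPart

open CubeAux Metric

variable (d : ℕ)

def vConst : ℝ≥0 :=
  3 ^ d + ((3 * Real.sqrt d) ^ d).toNNReal * (volume (ball (0 : Euc d) 1)).toNNReal

lemma volume_ball_lt_top : volume (ball (0 : Euc d) 1) < ⊤ :=
  measure_ball_lt_top

lemma volume_cb (x : Euc d) {r : ℝ} (hr : 0 ≤ r) :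
    volume (closedBall x r) = ENNReal.ofReal (r ^ d) * volume (ball (0 : Euc d) 1) := by
  have := Measure.addHaar_closedBall (volume : Measure (Euc d)) x hr
  simpa using this

lemma vitali_doubling : ∀ x : Euc d, ∃ᶠ r in nhdsWithin (0:ℝ) (Ioi 0),
    volume (closedBall x (3 * r)) ≤ (vConst d : ℝ≥0∞) * volume (closedBall x r) := by
  intro x
  apply Eventually.frequently
  filter_upwards [self_mem_nhdsWithin] with r (hr : r ∈ Ioi (0:ℝ))
  have hr0 : (0:ℝ) ≤ r := le_of_lt hr
  rw [volume_cb d x (by positivity), volume_cb d x hr0, mul_pow,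
    ENNReal.ofReal_mul (by positivity)]
  rw [show (vConst d : ℝ≥0∞) * (ENNReal.ofReal (r ^ d) * volume (ball (0:Euc d) 1))
      = (vConst d : ℝ≥0∞) * ENNReal.ofReal (r ^ d) * volume (ball (0:Euc d) 1) from
    (mul_assoc _ _ _).symm]
  gcongr ?_ * _ * _
  calc ENNReal.ofReal (3 ^ d) = (3 : ℝ≥0∞) ^ d := by
        rw [ENNReal.ofReal_pow (by norm_num)]; norm_num
    _ ≤ (vConst d : ℝ≥0∞) := by
        rw [vConst, ENNReal.coe_add]
        refine le_trans ?_ le_self_add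
        rw [ENNReal.coe_pow]
        norm_num

def vFam : VitaliFamily (volume : Measure (Euc d)) :=
  Vitali.vitaliFamily volume (vConst d) (vitali_doubling d)

lemma closure_cube_mem_setsAt {a : Euc d} {ρ : ℝ} (hρ : 0 < ρ) {x : Euc d}
    (hx : x ∈ cube a ρ) : closure (cube a ρ) ∈ (vFam d).setsAt x := by
  have hsub : closure (cube a ρ) ⊆ ccube a ρ := closure_cube_subset a ρ
  have hxc : x ∈ ccube a ρ := cube_subset_ccube a ρ hx
  refine ⟨isClosed_closure, ?_, ρ * Real.sqrt d, ?_, ?_⟩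
  · -- interior nonempty
    exact ⟨_, interior_mono subset_closure
      (by rw [(isOpen_cube a ρ).interior_eq]; exact mem_cube_self a hρ)⟩
  · intro y hy
    exact Metric.mem_closedBall.2 (dist_le_of_mem_ccube hρ.le (hsub hy) hxc)
  · -- volume comparison
    have hvol : volume (closure (cube a ρ)) = ENNReal.ofReal ρ ^ d := by
      apply le_antisymm
      · calc volume (closure (cube a ρ)) ≤ volume (ccube a ρ) := measure_mono hsub
          _ = ENNReal.ofReal ρ ^ d := volume_ccube a hρ.le
      · rw [← volume_cube a hρ.le]; exact measure_mono subset_closure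
    rw [hvol, volume_cb d x (by positivity)]
    have h3 : (3 * (ρ * Real.sqrt d)) ^ d = (3 * Real.sqrt d) ^ d * ρ ^ d := by ring
    rw [h3, ENNReal.ofReal_mul (by positivity)]
    calc ENNReal.ofReal ((3 * Real.sqrt d) ^ d) * ENNReal.ofReal (ρ ^ d) *
          volume (ball (0 : Euc d) 1)
        = (ENNReal.ofReal ((3 * Real.sqrt d) ^ d) * volume (ball (0 : Euc d) 1)) *
            ENNReal.ofReal (ρ ^ d) := by ring
      _ ≤ (vConst d : ℝ≥0∞) * ENNReal.ofReal (ρ ^ d) := by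
          gcongr
          rw [vConst, ENNReal.coe_add]
          refine le_trans ?_ le_add_self
          rw [ENNReal.coe_mul, ENNReal.coe_toNNReal (volume_ball_lt_top d).ne]
          gcongr
          exact le_of_eq rfl
      _ = (vConst d : ℝ≥0∞) * ENNReal.ofReal ρ ^ d := by
          rw [ENNReal.ofReal_pow hρ.le]

end VitaliPart

section Lebesgue

open CubeAux Metric

variable {d : ℕ}

lemma volume_closure_cube (a : Euc d) {ρ : ℝ} (hρ : 0 ≤ ρ) :
    volume (closure (cube a ρ)) = ENNReal.ofReal ρ ^ d := by
  apply le_antisymm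
  · calc volume (closure (cube a ρ)) ≤ volume (ccube a ρ) :=
        measure_mono (closure_cube_subset a ρ)
      _ = ENNReal.ofReal ρ ^ d := volume_ccube a hρ
  · rw [← volume_cube a hρ]; exact measure_mono subset_closure

lemma cube_ae_eq_closure (a : Euc d) {ρ : ℝ} (hρ : 0 < ρ) :
    (cube a ρ : Set (Euc d)) =ᵐ[volume] closure (cube a ρ) := by
  have h1 : volume (closure (cube a ρ) \ cube a ρ) = 0 := by
    have hm : volume (closure (cube a ρ) \ cube a ρ)
        ≤ volume (closure (cube a ρ)) - volume (cube a ρ) := by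
      apply measure_diff_le_iff_le_add (isOpen_cube a ρ).measurableSet.nullMeasurableSet
        subset_closure (by rw [volume_cube a hρ.le]; exact ENNReal.pow_ne_top ENNReal.ofReal_ne_top)
        |>.2
      rw [add_tsub_cancel_of_le (measure_mono subset_closure)]
    rw [volume_closure_cube a hρ.le, volume_cube a hρ.le, tsub_self] at hm
    exact le_antisymm hm zero_le
  refine (MeasureTheory.ae_eq_set.2 ⟨?_, h1⟩)
  rw [diff_eq_empty.2 subset_closure]; exact measure_empty

lemma ae_lebesgue_points (O : Set (Euc d)) (hO : IsOpen O) (H : Set (Euc d) → ℝ≥0∞)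
    (hint : ∫⁻ x in O, lowerDerivE O H x ∂volume < ⊤) :
    ∀ᵐ x ∂(volume.restrict O),
      lowerDerivE O H x ≠ ⊤ ∧
      ∀ ε : ℝ≥0∞, 0 < ε → ∃ δ : ℝ, 0 < δ ∧ ∀ Q : Set (Euc d), IsOpenCube Q → Q ⊆ O → x ∈ Q →
        Metric.diam Q ≤ δ →
        (∫⁻ y in Q, lowerDerivE O H y ∂volume) / volume Q ∈
          Icc (lowerDerivE O H x - ε) (lowerDerivE O H x + ε) := by
  set f := lowerDerivE O H with hf
  set f' := O.indicator f with hf'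
  have hmf : Measurable f := measurable_lowerDerivE O H
  have hmf' : Measurable f' := hmf.indicator hO.measurableSet
  have hint' : (∫⁻ y, f' y ∂volume) ≠ ⊤ := by
    rw [hf', lintegral_indicator hO.measurableSet]
    exact hint.ne
  have htend := (vFam d).ae_tendsto_lintegral_div hmf'.aemeasurable hint'
  have hfin : ∀ᵐ x ∂(volume : Measure (Euc d)), f' x < ⊤ := ae_lt_top hmf' hint'
  filter_upwards [ae_restrict_of_ae htend, ae_restrict_of_ae hfin,
    ae_restrict_mem hO.measurableSet] with x hx_tend hx_fin hxO
  have hfx : f' x = f x := indicator_of_mem hxO f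
  rw [hfx] at hx_fin hx_tend
  refine ⟨hx_fin.ne, fun ε hε => ?_⟩
  have := ((ENNReal.tendsto_nhds hx_fin.ne).1 hx_tend) ε hε
  obtain ⟨δ, hδ, hδP⟩ := ((vFam d).eventually_filterAt_iff).1 this
  refine ⟨δ, hδ, fun Q hQ hQO hxQ hdiam => ?_⟩
  obtain ⟨a, ρ, hρ, rfl⟩ := hQ
  have hQc : (cube a ρ : Set (Euc d)) = {y | ∀ i, a i < y i ∧ y i < a i + ρ} := rfl
  rw [← hQc] at *
  have hbd : Bornology.IsBounded (closure (cube a ρ)) :=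
    (isBounded_ccube a hρ.le).subset (closure_cube_subset a ρ)
  have hsub_cb : closure (cube a ρ) ⊆ closedBall x δ := by
    intro y hy
    refine Metric.mem_closedBall.2 ?_
    calc dist y x ≤ Metric.diam (closure (cube a ρ)) :=
          Metric.dist_le_diam_of_mem hbd hy (subset_closure hxQ)
      _ = Metric.diam (cube a ρ) := Metric.diam_closure _
      _ ≤ δ := hdiam
  have hP := hδP _ (closure_cube_mem_setsAt d hρ hxQ) hsub_cb
  have hveq : volume (closure (cube a ρ)) = volume (cube a ρ) := by
    rw [volume_closure_cube a hρ.le, volume_cube a hρ.le]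
  have hieq : (∫⁻ y in closure (cube a ρ), f' y ∂volume) = ∫⁻ y in cube a ρ, f y ∂volume := by
    rw [← setLIntegral_congr (cube_ae_eq_closure a hρ)]
    refine setLIntegral_congr_fun_ae (isOpen_cube a ρ).measurableSet ?_
    exact ae_of_all _ fun y hy => indicator_of_mem (hQO hy) f
  rw [hveq, hieq] at hP
  exact hP

end Lebesgue

section Main

open CubeAux

variable {d : ℕ}

lemma coe_toReal_ennreal {x : ℝ≥0∞} (h : x ≠ ⊤) : ((x.toReal : ℝ) : EReal) = (x : EReal) := by
  rw [← EReal.toReal_coe_ennreal]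
  exact EReal.coe_toReal (by simpa using h) (by simp)

lemma lowerDeriv_def (Ω : Set (Euc d)) (G : Set (Euc d) → EReal) (x : Euc d) :
    lowerDeriv Ω G x = ⨆ (ρ : ℝ) (_ : 0 < ρ),
      ⨅ (Q : Set (Euc d)) (_ : IsOpenCube Q ∧ Q ⊆ Ω ∧ x ∈ Q ∧ Metric.diam Q ≤ ρ),
        G Q * (((volume Q).toReal⁻¹ : ℝ) : EReal) := rfl

lemma lowerDerivE_eq_iSup (O : Set (Euc d)) (H : Set (Euc d) → ℝ≥0∞) (x : Euc d) :
    lowerDerivE O H x = ⨆ (ρ : ℝ) (_ : 0 < ρ), Ainf O H ρ x := rfl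

lemma pointwise_zero (O : Set (Euc d)) (H : Set (Euc d) → ℝ≥0∞)
    (hint : ∫⁻ x in O, lowerDerivE O H x ∂volume < ⊤)
    {x : Euc d}
    (hfin : lowerDerivE O H x ≠ ⊤)
    (hLP : ∀ ε : ℝ≥0∞, 0 < ε → ∃ δ : ℝ, 0 < δ ∧ ∀ Q : Set (Euc d), IsOpenCube Q → Q ⊆ O → x ∈ Q →
        Metric.diam Q ≤ δ →
        (∫⁻ y in Q, lowerDerivE O H y ∂volume) / volume Q ∈
          Icc (lowerDerivE O H x - ε) (lowerDerivE O H x + ε)) :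
    lowerDeriv O (fun Q =>
        ((H Q : EReal)) -
          (((∫⁻ y in Q, lowerDerivE O H y ∂volume).toReal : ℝ) : EReal)) x = 0 := by
  have key : ∀ Q : Set (Euc d), IsOpenCube Q → Q ⊆ O →
      volume Q ≠ 0 ∧ volume Q ≠ ⊤ ∧ (∫⁻ y in Q, lowerDerivE O H y ∂volume) ≠ ⊤ := by
    rintro Q ⟨a, ρ, hρ, rfl⟩ hQO
    have h1 : volume {y : Euc d | ∀ i, a i < y i ∧ y i < a i + ρ} = ENNReal.ofReal ρ ^ d :=
      volume_cube a hρ.le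
    refine ⟨?_, ?_, ?_⟩
    · rw [h1]; exact (ENNReal.pow_pos (ENNReal.ofReal_pos.2 hρ) d).ne'
    · rw [h1]; exact ENNReal.pow_ne_top ENNReal.ofReal_ne_top
    · exact ((lintegral_mono_set hQO).trans_lt hint).ne
  set L := lowerDerivE O H x with hLdef
  apply le_antisymm
  · -- upper bound : lowerDeriv ≤ 0
    refine le_of_forall_gt_imp_ge_of_dense fun c hc => ?_
    -- find a real 0 < r ≤ c
    obtain ⟨r, hr, hrc⟩ : ∃ r : ℝ, 0 < r ∧ (r : EReal) ≤ c := by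
      by_cases hT : c = ⊤
      · exact ⟨1, one_pos, hT ▸ le_top⟩
      · have hB : c ≠ ⊥ := fun h => by simp [h] at hc
        refine ⟨c.toReal, ?_, (EReal.coe_toReal hT hB).le⟩
        have := (EReal.coe_toReal hT hB)
        rw [← EReal.coe_lt_coe_iff (x := 0)]
        rw [EReal.coe_zero, this]
        exact hc
    refine le_trans ?_ hrc
    set ε : ℝ := r / 2 with hεdef
    have hε : 0 < ε := by positivity
    set ε' : ℝ≥0∞ := ENNReal.ofReal ε with hε'def
    have hε' : 0 < ε' := ENNReal.ofReal_pos.2 hε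
    obtain ⟨δ, hδ, hδP⟩ := hLP ε' hε'
    rw [lowerDeriv_def]
    refine iSup₂_le fun ρ hρ => ?_
    have hρ' : 0 < min ρ δ := lt_min hρ hδ
    have hA : Ainf O H (min ρ δ) x ≤ L := Ainf_le_lowerDerivE O H hρ' x
    have hlt : Ainf O H (min ρ δ) x < L + ε' :=
      hA.trans_lt (ENNReal.lt_add_right hfin hε'.ne')
    rw [Ainf, iInf_lt_iff] at hlt
    obtain ⟨Q, hQlt⟩ := hlt
    rw [iInf_lt_iff] at hQlt
    obtain ⟨⟨hQ1, hQ2, hQ3, hQ4⟩, hQlt⟩ := hQlt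
    obtain ⟨hv0, hvT, hIT⟩ := key Q hQ1 hQ2
    have hmem := hδP Q hQ1 hQ2 hQ3 (hQ4.trans (min_le_right _ _))
    have hHfin : H Q ≠ ⊤ := by
      intro hH
      rw [hH, ENNReal.top_div_of_ne_top hvT] at hQlt
      exact not_top_lt hQlt
    refine iInf₂_le_of_le Q ⟨hQ1, hQ2, hQ3, hQ4.trans (min_le_left _ _)⟩ ?_
    set v := (volume Q).toReal with hv
    have hvpos : 0 < v := ENNReal.toReal_pos hv0 hvT
    set c' := (∫⁻ y in Q, lowerDerivE O H y ∂volume).toReal with hc'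
    rw [← coe_toReal_ennreal hHfin, ← EReal.coe_sub, ← EReal.coe_mul, EReal.coe_le_coe_iff]
    have hLεT : L + ε' ≠ ⊤ := ENNReal.add_ne_top.2 ⟨hfin, ENNReal.ofReal_ne_top⟩
    have hhv : (H Q).toReal / v ≤ L.toReal + ε := by
      have h2 := ENNReal.toReal_mono hLεT hQlt.le
      rw [ENNReal.toReal_div] at h2
      rwa [ENNReal.toReal_add hfin ENNReal.ofReal_ne_top, ENNReal.toReal_ofReal hε.le] at h2
    have hIfin2 : (∫⁻ y in Q, lowerDerivE O H y ∂volume) / volume Q ≠ ⊤ :=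
      (ENNReal.div_lt_top hIT hv0).ne
    have hcv : L.toReal - ε ≤ c' / v := by
      have h2 : L ≤ (∫⁻ y in Q, lowerDerivE O H y ∂volume) / volume Q + ε' :=
        tsub_le_iff_right.1 hmem.1
      have h3 := ENNReal.toReal_mono (ENNReal.add_ne_top.2 ⟨hIfin2, ENNReal.ofReal_ne_top⟩) h2
      rw [ENNReal.toReal_add hIfin2 ENNReal.ofReal_ne_top, ENNReal.toReal_ofReal hε.le,
        ENNReal.toReal_div] at h3
      linarith
    have expand : ((H Q).toReal - c') * v⁻¹ = (H Q).toReal / v - c' / v := by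
      field_simp
    rw [expand]
    have : (H Q).toReal / v - c' / v ≤ 2 * ε := by linarith
    linarith
  · -- lower bound : 0 ≤ lowerDeriv
    refine le_of_forall_lt_imp_le_of_dense fun c hc => ?_
    by_cases hB : c = ⊥
    · exact hB ▸ bot_le
    obtain ⟨r, hr, hrc⟩ : ∃ r : ℝ, r < 0 ∧ c ≤ (r : EReal) := by
      have hT : c ≠ ⊤ := fun h => by simp [h] at hc
      refine ⟨c.toReal, ?_, (EReal.coe_toReal hT hB).ge⟩
      rw [← EReal.coe_lt_coe_iff (y := 0), EReal.coe_zero, EReal.coe_toReal hT hB]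
      exact hc
    refine le_trans hrc ?_
    set ε : ℝ := -r / 2 with hεdef
    have hε : 0 < ε := by simp only [hεdef]; linarith
    set ε' : ℝ≥0∞ := ENNReal.ofReal ε with hε'def
    have hε' : 0 < ε' := ENNReal.ofReal_pos.2 hε
    obtain ⟨δ, hδ, hδP⟩ := hLP ε' hε'
    obtain ⟨δ1, hδ1, hδ1P⟩ : ∃ δ1 : ℝ, 0 < δ1 ∧ ∀ Q : Set (Euc d),
        (IsOpenCube Q ∧ Q ⊆ O ∧ x ∈ Q ∧ Metric.diam Q ≤ δ1) → L - ε' ≤ H Q / volume Q := by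
      by_cases hLε : L ≤ ε'
      · exact ⟨1, one_pos, fun Q _ => by rw [tsub_eq_zero_of_le hLε]; exact zero_le⟩
      · push_neg at hLε
        have h0 : L - ε' < L := ENNReal.sub_lt_self hfin (hε'.trans hLε).ne' hε'.ne'
        rw [hLdef, lowerDerivE_eq_iSup, lt_iSup_iff] at h0
        obtain ⟨ρ0, h0⟩ := h0
        rw [lt_iSup_iff] at h0
        obtain ⟨hρ0, h0⟩ := h0
        exact ⟨ρ0, hρ0, fun Q hQ => h0.le.trans (iInf₂_le Q hQ)⟩
    rw [lowerDeriv_def]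
    refine le_iSup₂_of_le (min δ δ1) (lt_min hδ hδ1) (le_iInf₂ fun Q hQ => ?_)
    obtain ⟨hQ1, hQ2, hQ3, hQ4⟩ := hQ
    obtain ⟨hv0, hvT, hIT⟩ := key Q hQ1 hQ2
    have hvpos : 0 < (volume Q).toReal := ENNReal.toReal_pos hv0 hvT
    have hmem := hδP Q hQ1 hQ2 hQ3 (hQ4.trans (min_le_left _ _))
    have hlow : L - ε' ≤ H Q / volume Q :=
      hδ1P Q ⟨hQ1, hQ2, hQ3, hQ4.trans (min_le_right _ _)⟩
    by_cases hHT : H Q = ⊤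
    · rw [hHT, EReal.coe_ennreal_top, EReal.top_sub_coe, EReal.top_mul_of_pos]
      · exact le_top
      · exact_mod_cast EReal.coe_pos.2 (inv_pos.2 hvpos)
    -- finite case
    set v := (volume Q).toReal with hv
    set c' := (∫⁻ y in Q, lowerDerivE O H y ∂volume).toReal with hc'
    rw [← coe_toReal_ennreal hHT, ← EReal.coe_sub, ← EReal.coe_mul, EReal.coe_le_coe_iff]
    have hLεT : L + ε' ≠ ⊤ := ENNReal.add_ne_top.2 ⟨hfin, ENNReal.ofReal_ne_top⟩
    have hHdivT : H Q / volume Q ≠ ⊤ := (ENNReal.div_lt_top hHT hv0).ne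
    have hhv : L.toReal - ε ≤ (H Q).toReal / v := by
      have h2 : L ≤ H Q / volume Q + ε' := tsub_le_iff_right.1 hlow
      have h3 := ENNReal.toReal_mono (ENNReal.add_ne_top.2 ⟨hHdivT, ENNReal.ofReal_ne_top⟩) h2
      rw [ENNReal.toReal_add hHdivT ENNReal.ofReal_ne_top, ENNReal.toReal_ofReal hε.le,
        ENNReal.toReal_div] at h3
      linarith
    have hcv : c' / v ≤ L.toReal + ε := by
      have h3 := ENNReal.toReal_mono hLεT hmem.2
      rwa [ENNReal.toReal_div, ENNReal.toReal_add hfin ENNReal.ofReal_ne_top,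
        ENNReal.toReal_ofReal hε.le] at h3
    have expand : ((H Q).toReal - c') * v⁻¹ = (H Q).toReal / v - c' / v := by
      field_simp
    rw [expand]
    linarith

end Main

/-- If `H ≥ 0` is a set function whose lower derivative is integrable on `O`, then the set
function `G(Q) = H(Q) − ∫_Q D̲_λ H dy` has vanishing lower derivative a.e. in `O`. -/
theorem lowerDeriv_sub_integral_lowerDeriv_eq_zero
    {d : ℕ} (Ω O : Set (Euc d)) (hΩo : IsOpen Ω) (hΩb : Bornology.IsBounded Ω)
    (hΩne : Ω.Nonempty) (hO : IsOpen O) (hOΩ : O ⊆ Ω)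
    (H : Set (Euc d) → ℝ≥0∞)
    (hint : ∫⁻ x in O, lowerDerivE O H x ∂volume < ⊤) :
    ∀ᵐ x ∂(volume.restrict O),
      lowerDeriv O (fun Q =>
          ((H Q : EReal)) -
            (((∫⁻ y in Q, lowerDerivE O H y ∂volume).toReal : ℝ) : EReal)) x = 0 := by
  filter_upwards [ae_lebesgue_points O hO H hint] with x hx
  exact pointwise_zero O H hint hx.1 hx.2
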